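/- If t ∈ [0,1) is not a b-adic rational (i.e., t ∉ {k/bᵐ : m ∈ ℕ₀, 0 ≤ k < bᵐ}), then [0,t) is not a bounded remainder interval for the van der Corput sequence in base b: the quantity #{n < N : Y_b(n) ∈ [0,t)} − N·t is unbounded in N. -/

import Mathlib

open scoped Classical

/-- The b-adic radical inverse (van der Corput) function. -/
noncomputable def vdc (b n : ℕ) : ℝ :=
  ∑ j ∈ Finset.range (n + 1), ((n / b ^ j % b : ℕ) : ℝ) / (b : ℝ) ^ (j + 1)

lemma vdc_eq (b n M : ℕ) (hb : 2 ≤ b) (h : n + 1 ≤ M) :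
    vdc b n = ∑ j ∈ Finset.range M, ((n / b ^ j % b : ℕ) : ℝ) / (b : ℝ) ^ (j + 1) := by
  unfold vdc
  apply Finset.sum_subset (Finset.range_subset_range.mpr h)
  intro j hj hj'
  simp only [Finset.mem_range] at hj hj'
  have h2 : n < 2 ^ j := lt_of_lt_of_le (Nat.lt_two_pow_self (n := n)) (Nat.pow_le_pow_right (by norm_num) (by omega))
  have : n / b ^ j = 0 := Nat.div_eq_of_lt (lt_of_lt_of_le h2 (Nat.pow_le_pow_left hb j))
  simp [this]

lemma vdc_zero (b : ℕ) : vdc b 0 = 0 := by simp [vdc]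

lemma vdc_shift (b c a : ℕ) (hb : 2 ≤ b) (ha : a < b) :
    vdc b (c * b + a) = (a : ℝ) / b + vdc b c / b := by
  rcases Nat.eq_zero_or_pos (c * b + a) with h0 | hpos
  · have hc : c = 0 := by
      rcases Nat.eq_zero_or_pos c with h | h
      · exact h
      · exfalso; nlinarith [Nat.one_le_iff_ne_zero.mpr (by omega : b ≠ 0)]
    have haz : a = 0 := by omega
    simp [hc, haz, vdc_zero]
  · set n := c * b + a with hn
    have hM : c + 1 ≤ n := by
      rcases Nat.eq_zero_or_pos c with h | h
      · omega
      · have : c * 2 ≤ c * b := Nat.mul_le_mul_left c hb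
        omega
    rw [vdc]
    rw [Finset.sum_range_succ']
    have hdivb : n / b = c := by
      rw [hn, Nat.add_comm, Nat.add_mul_div_right _ _ (by omega : 0 < b), Nat.div_eq_of_lt ha]
      omega
    have hd0 : n / b ^ 0 % b = a := by
      rw [pow_zero, Nat.div_one, hn, Nat.mul_add_mod', Nat.mod_eq_of_lt ha]
    have hdj : ∀ j, n / b ^ (j + 1) % b = c / b ^ j % b := by
      intro j
      rw [pow_succ', ← Nat.div_div_eq_div_mul, hdivb]
    rw [hd0]
    have hsum : (∑ j ∈ Finset.range n, ((n / b ^ (j + 1) % b : ℕ) : ℝ) / (b : ℝ) ^ (j + 1 + 1))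
        = vdc b c / b := by
      rw [vdc_eq b c n hb hM, Finset.sum_div]
      apply Finset.sum_congr rfl
      intro j _
      rw [hdj j]
      rw [div_div, ← pow_succ]
    rw [hsum, pow_one, add_comm]

lemma vdc_decomp (b n : ℕ) (hb : 2 ≤ b) :
    vdc b n = ((n % b : ℕ) : ℝ) / b + vdc b (n / b) / b := by
  conv_lhs => rw [← Nat.div_add_mod n b, Nat.mul_comm]
  exact vdc_shift b (n / b) (n % b) hb (Nat.mod_lt _ (by omega))

lemma vdc_nonneg (b n : ℕ) : 0 ≤ vdc b n := by
  unfold vdc; positivity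

lemma vdc_lt_one (b n : ℕ) (hb : 2 ≤ b) : vdc b n < 1 := by
  induction n using Nat.strong_induction_on with
  | _ n ih =>
    rcases Nat.eq_zero_or_pos n with h | h
    · simp [h, vdc_zero]
    · rw [vdc_decomp b n hb]
      have h1 : vdc b (n / b) < 1 := ih _ (Nat.div_lt_self h (by omega))
      have h2 : ((n % b : ℕ) : ℝ) ≤ (b : ℝ) - 1 := by
        have : n % b ≤ b - 1 := by have := Nat.mod_lt n (show 0 < b by omega); omega
        calc ((n % b : ℕ) : ℝ) ≤ ((b - 1 : ℕ) : ℝ) := by exact_mod_cast this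
        _ = (b : ℝ) - 1 := by push_cast [Nat.cast_sub (by omega : 1 ≤ b)]; ring
      have hbpos : (0:ℝ) < b := by positivity
      rw [← add_div, div_lt_one hbpos]
      linarith

/-- digit reversal of the `m` lowest `b`-adic digits -/
def rev (b : ℕ) : ℕ → ℕ → ℕ
  | 0, _ => 0
  | m + 1, r => (r % b) * b ^ m + rev b m (r / b)

lemma rev_lt (b : ℕ) (hb : 2 ≤ b) : ∀ m r, rev b m r < b ^ m := by
  intro m
  induction m with
  | zero => intro r; simp [rev]
  | succ m ih =>
    intro r
    have h1 : r % b ≤ b - 1 := by have := Nat.mod_lt r (show 0 < b by omega); omega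
    have h2 : rev b m (r / b) < b ^ m := ih _
    have : (r % b) * b ^ m ≤ (b - 1) * b ^ m := Nat.mul_le_mul_right _ h1
    calc rev b (m+1) r = (r % b) * b ^ m + rev b m (r / b) := rfl
    _ < (b - 1) * b ^ m + b ^ m := by omega
    _ = (b - 1 + 1) * b ^ m := (Nat.succ_mul _ _).symm
    _ = b ^ (m + 1) := by rw [show b - 1 + 1 = b from by omega, pow_succ']

lemma rev_succ' (b : ℕ) (hb : 2 ≤ b) : ∀ m r,
    rev b (m + 1) r = r / b ^ m % b + b * rev b m (r % b ^ m) := by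
  intro m
  induction m with
  | zero => intro r; simp [rev]
  | succ m ih =>
    intro r
    have e1 : r / b / b ^ m = r / b ^ (m + 1) := by
      rw [Nat.div_div_eq_div_mul, ← pow_succ']
    have e2 : r % b ^ (m + 1) % b = r % b := by
      apply Nat.mod_mod_of_dvd
      exact dvd_pow_self b (Nat.succ_ne_zero m)
    have e3 : r % b ^ (m + 1) / b = r / b % b ^ m := by
      rw [pow_succ', Nat.mod_mul_right_div_self]
    calc rev b (m + 2) r = (r % b) * b ^ (m + 1) + rev b (m + 1) (r / b) := rfl
    _ = (r % b) * b ^ (m + 1) + (r / b / b ^ m % b + b * rev b m (r / b % b ^ m)) := by rw [ih]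
    _ = r / b ^ (m + 1) % b + b * ((r % b ^ (m + 1) % b) * b ^ m + rev b m (r % b ^ (m + 1) / b)) := by
        rw [e1, e2, e3]; ring
    _ = r / b ^ (m + 1) % b + b * rev b (m + 1) (r % b ^ (m + 1)) := rfl

lemma rev_rev (b : ℕ) (hb : 2 ≤ b) : ∀ m r, r < b ^ m → rev b m (rev b m r) = r := by
  intro m
  induction m with
  | zero =>
    intro r hr
    have h0 : r = 0 := by simpa [Nat.lt_one_iff] using hr
    subst h0; simp [rev]
  | succ m ih =>
    intro r hr
    have hrb : r / b < b ^ m := by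
      rw [Nat.div_lt_iff_lt_mul (by omega : 0 < b)]
      calc r < b ^ (m + 1) := hr
      _ = b ^ m * b := by rw [pow_succ]
    have hlt : rev b m (r / b) < b ^ m := rev_lt b hb m _
    have hx1 : rev b (m + 1) r / b ^ m = r % b := by
      show ((r % b) * b ^ m + rev b m (r / b)) / b ^ m = r % b
      rw [Nat.add_comm, Nat.add_mul_div_right _ _ (by positivity : 0 < b ^ m),
        Nat.div_eq_of_lt hlt]
      omega
    have hx2 : rev b (m + 1) r % b ^ m = rev b m (r / b) := by
      show ((r % b) * b ^ m + rev b m (r / b)) % b ^ m = _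
      rw [Nat.mul_add_mod', Nat.mod_eq_of_lt hlt]
    rw [rev_succ' b hb, hx1, hx2, Nat.mod_eq_of_lt (show r % b < b from Nat.mod_lt _ (by omega)),
      ih _ hrb, Nat.add_comm, Nat.div_add_mod]

lemma vdc_block (b : ℕ) (hb : 2 ≤ b) : ∀ m c r, r < b ^ m →
    vdc b (c * b ^ m + r) = ((rev b m r : ℕ) : ℝ) / (b : ℝ) ^ m + vdc b c / (b : ℝ) ^ m := by
  intro m
  induction m with
  | zero =>
    intro c r hr
    have h0 : r = 0 := by simpa [Nat.lt_one_iff] using hr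
    subst h0; simp [rev]
  | succ m ih =>
    intro c r hr
    have hbpos : (0:ℝ) < b := by positivity
    have hrb : r / b < b ^ m := by
      rw [Nat.div_lt_iff_lt_mul (by omega : 0 < b)]
      calc r < b ^ (m + 1) := hr
      _ = b ^ m * b := by rw [pow_succ]
    have hsplit : c * b ^ (m + 1) + r = (c * b ^ m + r / b) * b + r % b := by
      have := Nat.div_add_mod r b
      rw [Nat.add_mul, Nat.mul_assoc, ← pow_succ, Nat.add_assoc, Nat.div_add_mod']
    rw [hsplit, vdc_shift b _ _ hb (Nat.mod_lt _ (by omega)), ih c (r / b) hrb]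
    show ((r % b : ℕ) : ℝ) / b + (((rev b m (r/b) : ℕ) : ℝ) / (b:ℝ)^m + vdc b c / (b:ℝ)^m) / b
      = ((((r % b) * b ^ m + rev b m (r / b) : ℕ) : ℝ)) / (b:ℝ)^(m+1) + vdc b c / (b:ℝ)^(m+1)
    push_cast
    field_simp
    ring

lemma vdc_mul_pow (b w : ℕ) (hb : 2 ≤ b) : ∀ g, vdc b (w * b ^ g) = vdc b w / (b : ℝ) ^ g := by
  intro g
  induction g with
  | zero => simp
  | succ g ih =>
    have : w * b ^ (g + 1) = (w * b ^ g) * b + 0 := by rw [pow_succ]; ring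
    rw [this, vdc_shift b _ 0 hb (by omega), ih]
    push_cast
    rw [pow_succ]
    field_simp
    ring

lemma vdc_mod_one (b w : ℕ) (hb : 2 ≤ b) (hw : w % b = 1) : vdc b w < 2 / b := by
  have hbpos : (0:ℝ) < b := by positivity
  rw [vdc_decomp b w hb, hw]
  have := vdc_lt_one b (w / b) hb
  rw [← add_div, div_lt_div_iff₀ hbpos hbpos]
  push_cast
  nlinarith

/-- splitting a count over `range (A+B)` -/
lemma card_filter_range_add (P : ℕ → Prop) (A B : ℕ) :
    ((Finset.range (A + B)).filter P).card
      = ((Finset.range A).filter P).card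
        + ((Finset.range B).filter (fun r => P (A + r))).card := by
  rw [Finset.range_add, Finset.filter_union, Finset.card_union_of_disjoint]
  · congr 1
    rw [Finset.filter_map, Finset.card_map]
    rfl
  · apply Finset.disjoint_filter_filter
    rw [Finset.disjoint_left]
    intro x hx hx'
    simp only [Finset.mem_range] at hx
    simp only [Finset.mem_map, addLeftEmbedding_apply] at hx'
    omega

lemma filter_lt_card (K M : ℕ) :
    ((Finset.range M).filter (fun k => k < K)).card = min K M := by
  have : (Finset.range M).filter (fun k => k < K) = Finset.range (min K M) := by
    ext x
    simp only [Finset.mem_filter, Finset.mem_range, lt_min_iff]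
    tauto
  rw [this, Finset.card_range]

lemma block_count (b : ℕ) (hb : 2 ≤ b) (t : ℝ) (ht0 : 0 ≤ t) (ht1 : t < 1) (m c : ℕ) :
    (((Finset.range (b ^ m)).filter
        (fun r => vdc b (c * b ^ m + r) ∈ Set.Ico (0:ℝ) t)).card : ℤ)
      = (⌈(b : ℝ) ^ m * t - vdc b c⌉).toNat := by
  have hbpos : (0:ℝ) < (b:ℝ) ^ m := by positivity
  set X : ℝ := (b : ℝ) ^ m * t - vdc b c with hX
  set K : ℕ := (⌈X⌉).toNat with hK
  have hcond : ∀ r < b ^ m, (vdc b (c * b ^ m + r) ∈ Set.Ico (0:ℝ) t ↔ rev b m r < K) := by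
    intro r hr
    have hmem : vdc b (c * b ^ m + r) ∈ Set.Ico (0:ℝ) t ↔ vdc b (c * b ^ m + r) < t :=
      ⟨fun h => h.2, fun h => ⟨vdc_nonneg _ _, h⟩⟩
    rw [hmem, vdc_block b hb m c r hr]
    rw [← add_div, div_lt_iff₀ hbpos]
    constructor
    · intro h
      have h2 : ((rev b m r : ℕ) : ℝ) < X := by rw [hX]; linarith [mul_comm t ((b:ℝ)^m)]
      have h3 : ((rev b m r : ℕ) : ℤ) < ⌈X⌉ := Int.lt_ceil.mpr (by exact_mod_cast h2)
      exact Int.lt_toNat.mpr h3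
    · intro h
      have h3 : ((rev b m r : ℕ) : ℤ) < ⌈X⌉ := Int.lt_toNat.mp h
      have h4 : ((rev b m r : ℕ) : ℝ) ≤ X - (X - (⌈X⌉ - 1)) := by
        have : ((rev b m r : ℕ) : ℤ) ≤ ⌈X⌉ - 1 := by omega
        have h5 : ((rev b m r : ℕ) : ℝ) ≤ (⌈X⌉ : ℝ) - 1 := by exact_mod_cast this
        linarith
      have h6 : ((⌈X⌉ : ℝ)) - 1 < X := by
        have := Int.ceil_lt_add_one X
        linarith
      have : ((rev b m r : ℕ) : ℝ) < X := by linarith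
      rw [hX] at this
      linarith [mul_comm ((b:ℝ)^m) t]
  have hcount : ((Finset.range (b ^ m)).filter
        (fun r => vdc b (c * b ^ m + r) ∈ Set.Ico (0:ℝ) t)).card
      = ((Finset.range (b ^ m)).filter (fun k => k < K)).card := by
    apply Finset.card_bij (fun r _ => rev b m r)
    · intro r hr
      simp only [Finset.mem_filter, Finset.mem_range] at hr ⊢
      exact ⟨rev_lt b hb m r, (hcond r hr.1).mp hr.2⟩
    · intro r hr r' hr' hrr
      simp only [Finset.mem_filter, Finset.mem_range] at hr hr'
      have := congrArg (rev b m) hrr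
      rwa [rev_rev b hb m r hr.1, rev_rev b hb m r' hr'.1] at this
    · intro k hk
      simp only [Finset.mem_filter, Finset.mem_range] at hk
      refine ⟨rev b m k, ?_, rev_rev b hb m k hk.1⟩
      simp only [Finset.mem_filter, Finset.mem_range]
      refine ⟨rev_lt b hb m k, ?_⟩
      rw [(hcond _ (rev_lt b hb m k))]
      rw [rev_rev b hb m k hk.1]
      exact hk.2
  rw [hcount, filter_lt_card]
  have hKle : K ≤ b ^ m := by
    have h1 : X < (b:ℝ) ^ m := by
      rw [hX]
      have := vdc_nonneg b c
      nlinarith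
    have h2 : ⌈X⌉ ≤ (b ^ m : ℕ) := by
      rw [Int.ceil_le]
      push_cast
      linarith
    omega
  rw [min_eq_left hKle]

section
variable (b : ℕ) (t : ℝ)

lemma fract_pos (hb : 2 ≤ b) (ht0 : 0 ≤ t)
    (hirr : ∀ m k : ℕ, t ≠ (k : ℝ) / (b : ℝ) ^ m) (m : ℕ) :
    0 < Int.fract ((b : ℝ) ^ m * t) := by
  rcases lt_or_eq_of_le (Int.fract_nonneg ((b : ℝ) ^ m * t)) with h | h
  · exact h
  · exfalso
    have hX : (b : ℝ) ^ m * t = ⌊(b : ℝ) ^ m * t⌋ := by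
      have := Int.fract_add_floor ((b : ℝ) ^ m * t)
      rw [← h] at this; linarith
    have hfl : 0 ≤ ⌊(b : ℝ) ^ m * t⌋ := by
      apply Int.floor_nonneg.mpr; positivity
    apply hirr m (⌊(b : ℝ) ^ m * t⌋).toNat
    have hbm : (0:ℝ) < (b:ℝ) ^ m := by positivity
    have h4 : ((⌊(b : ℝ) ^ m * t⌋.toNat : ℕ) : ℝ) = ((⌊(b : ℝ) ^ m * t⌋ : ℤ) : ℝ) := by
      exact_mod_cast Int.toNat_of_nonneg hfl
    rw [eq_div_iff (ne_of_gt hbm), mul_comm, h4]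
    exact hX

lemma A_unbounded (hb : 2 ≤ b) (M : ℕ) (hfr : ∀ m : ℕ, 0 < Int.fract ((b : ℝ) ^ m * t)) :
    ∃ m, M ≤ m ∧ Int.fract ((b : ℝ) ^ m * t) ≤ 1 - 1 / b := by
  by_contra hcon
  push_neg at hcon
  have hb1 : (1:ℝ) < b := by exact_mod_cast (by omega : 1 < b)
  have key : ∀ k, 1 - Int.fract ((b : ℝ) ^ (M + k) * t)
      = (b:ℝ) ^ k * (1 - Int.fract ((b : ℝ) ^ M * t)) := by
    intro k
    induction k with
    | zero => simp
    | succ k ih =>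
      set f := Int.fract ((b : ℝ) ^ (M + k) * t) with hf
      have hfgt : 1 - 1/(b:ℝ) < f := hcon (M + k) (by omega)
      have hflt : f < 1 := Int.fract_lt_one _
      have hstep : Int.fract ((b : ℝ) ^ (M + k + 1) * t) = (b:ℝ) * f - ((b:ℝ) - 1) := by
        have h1 : (b : ℝ) ^ (M + k + 1) * t
            = (b : ℝ) * (⌊(b : ℝ) ^ (M + k) * t⌋ : ℝ) + (b:ℝ) * f := by
          rw [pow_succ]
          have := Int.fract_add_floor ((b : ℝ) ^ (M + k) * t)
          rw [hf]
          nlinarith [this]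
        rw [h1]
        have h3 : Int.fract ((b:ℝ) * (⌊(b : ℝ) ^ (M + k) * t⌋ : ℝ) + (b:ℝ) * f)
            = Int.fract ((b:ℝ) * f) := by
          have : ((b:ℝ) * (⌊(b : ℝ) ^ (M + k) * t⌋ : ℝ)) = (((b : ℤ) * ⌊(b : ℝ) ^ (M + k) * t⌋ : ℤ) : ℝ) := by
            push_cast; ring
          rw [this, Int.fract_intCast_add]
        rw [h3]
        have hbf1 : (b:ℝ) - 1 < (b:ℝ) * f := by
          have := mul_lt_mul_of_pos_left hfgt (show (0:ℝ) < b by linarith)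
          have hbne : (b:ℝ) ≠ 0 := by linarith
          calc (b:ℝ) - 1 = b * (1 - 1/b) := by field_simp
          _ < b * f := this
        have hbf2 : (b:ℝ) * f < b := by nlinarith
        have hfloor : ⌊(b:ℝ) * f⌋ = (b:ℤ) - 1 := by
          apply Int.floor_eq_iff.mpr
          constructor
          · push_cast; linarith
          · push_cast; linarith
        simp only [Int.fract, hfloor]
        push_cast; ring
      rw [show M + (k+1) = M + k + 1 from rfl, hstep]
      have : 1 - ((b:ℝ) * f - ((b:ℝ) - 1)) = (b:ℝ) * (1 - f) := by ring
      rw [this, ih, pow_succ]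
      ring
  obtain ⟨k, hk⟩ := pow_unbounded_of_one_lt (1 / (1 - Int.fract ((b : ℝ) ^ M * t))) hb1
  have hM : 0 < 1 - Int.fract ((b : ℝ) ^ M * t) := by
    have := Int.fract_lt_one ((b : ℝ) ^ M * t)
    linarith
  have h1 : 1 < (b:ℝ) ^ k * (1 - Int.fract ((b : ℝ) ^ M * t)) := by
    rw [div_lt_iff₀ hM] at hk
    linarith
  rw [← key k] at h1
  have := hfr (M + k)
  linarith
end

lemma dec_trans (K : ℕ) (w : ℕ → ℕ) (h : ∀ i, i + 1 < K → w (i+1) < w i) :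
    ∀ i j, i < j → j < K → w j < w i := by
  intro i j
  induction j with
  | zero => intro h1 _; omega
  | succ j ih =>
    intro hij hj
    rcases Nat.lt_or_ge i j with h' | h'
    · exact lt_trans (h j hj) (ih h' (by omega))
    · have hij' : i = j := by omega
      rw [hij']; exact h j hj

lemma accum (b : ℕ) (hb : 2 ≤ b) (t : ℝ) (ht0 : 0 ≤ t) (ht1 : t < 1)
    (hf : ∀ m : ℕ, 0 < Int.fract ((b:ℝ)^m * t)) :
    ∀ (K : ℕ) (w : ℕ → ℕ),
    (∀ i, i + 1 < K → w (i+1) < w i) →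
    (∀ i, i < K → Int.fract ((b:ℝ)^(w i) * t) ≤ 1 - 1/b) →
    (∀ i, i + 1 < K → 1 ≤ (b:ℝ)^(w i - w (i+1)) * Int.fract ((b:ℝ)^(w (i+1)) * t)) →
    (K : ℝ) / b ≤
      ((((Finset.range (∑ i ∈ Finset.range K, b ^ w i)).filter
          (fun n => vdc b n ∈ Set.Ico (0:ℝ) t)).card : ℝ)
        - ((∑ i ∈ Finset.range K, b ^ w i : ℕ) : ℝ) * t) := by
  intro K
  induction K with
  | zero => intro w _ _ _; simp
  | succ K ihK =>
    intro w hdec hA hgap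
    have hbR : (0:ℝ) < b := by positivity
    have hmono := dec_trans (K+1) w hdec
    have ih := ihK w (fun i hi => hdec i (by omega)) (fun i hi => hA i (by omega))
      (fun i hi => hgap i (by omega))
    set N := ∑ i ∈ Finset.range K, b ^ w i with hN
    set c := ∑ i ∈ Finset.range K, b ^ (w i - w K) with hc
    have hNc : N = c * b ^ (w K) := by
      rw [hN, hc, Finset.sum_mul]
      apply Finset.sum_congr rfl
      intro i hi
      rw [Finset.mem_range] at hi
      rw [← pow_add, Nat.sub_add_cancel (le_of_lt (hmono i K hi (by omega)))]
    have hsum : ∑ i ∈ Finset.range (K+1), b ^ w i = N + b ^ (w K) := by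
      rw [Finset.sum_range_succ, hN]
    -- the key: vdc b c < fract
    have hvdc : vdc b c < Int.fract ((b:ℝ)^(w K) * t) := by
      rcases Nat.eq_zero_or_pos K with hK0 | hKpos
      · have hc0 : c = 0 := by simp [hc, hK0]
        rw [hc0, vdc_zero]
        exact hf (w K)
      · set K' := K - 1 with hK'
        have hKK : K' + 1 = K := by omega
        set g := w K' - w K with hg
        have hwlt : w K < w K' := by
          have := hdec K' (by omega)
          rwa [hKK] at this
        set w' := ∑ i ∈ Finset.range K, b ^ (w i - w K') with hw'
        have hcw : c = w' * b ^ g := by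
          rw [hc, hw', Finset.sum_mul]
          apply Finset.sum_congr rfl
          intro i hi
          rw [Finset.mem_range] at hi
          have h1 : w K' ≤ w i := by
            rcases Nat.lt_or_ge i K' with h' | h'
            · exact le_of_lt (hmono i K' h' (by omega))
            · have hik : i = K' := by omega
              rw [hik]
          rw [← pow_add]
          congr 1
          omega
        have hw'mod : w' % b = 1 := by
          rw [hw', ← hKK, Finset.sum_range_succ, Nat.sub_self, pow_zero]
          have hdvd : b ∣ ∑ i ∈ Finset.range K', b ^ (w i - w K') := by
            apply Finset.dvd_sum
            intro i hi
            rw [Finset.mem_range] at hi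
            have h1 : w K' < w i := hmono i K' hi (by omega)
            have h2 : w i - w K' ≠ 0 := by omega
            exact dvd_pow_self b h2
          obtain ⟨q, hq⟩ := hdvd
          rw [hq, Nat.mul_add_mod]
          exact Nat.mod_eq_of_lt (by omega)
        have hfr := hf (w K)
        have hgapK := hgap K' (by omega)
        rw [hKK] at hgapK
        rw [← hg] at hgapK
        have hfge : 1 / (b:ℝ)^g ≤ Int.fract ((b:ℝ)^(w K) * t) := by
          rw [div_le_iff₀ (by positivity)]
          linarith [mul_comm ((b:ℝ)^g) (Int.fract ((b:ℝ)^(w K) * t))]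
        have h2b : vdc b w' < 2 / b := vdc_mod_one b w' hb hw'mod
        have hvc : vdc b c = vdc b w' / (b:ℝ)^g := by rw [hcw]; exact vdc_mul_pow b w' hb g
        rw [hvc]
        have hgpos : (0:ℝ) < (b:ℝ)^g := by positivity
        calc vdc b w' / (b:ℝ)^g < (2/b) / (b:ℝ)^g := by gcongr
        _ ≤ 1 / (b:ℝ)^g := by
              gcongr
              rw [div_le_one hbR]
              exact_mod_cast hb
        _ ≤ _ := hfge
    -- counting
    set X : ℝ := (b:ℝ)^(w K) * t with hX
    have hXnn : 0 ≤ X := by rw [hX]; positivity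
    have hfl0 : 0 ≤ ⌊X⌋ := Int.floor_nonneg.mpr hXnn
    have hfract : Int.fract X = X - ⌊X⌋ := rfl
    have hceil : ⌈X - vdc b c⌉ = ⌊X⌋ + 1 := by
      rw [Int.ceil_eq_iff]
      constructor
      · push_cast
        have h0 := hvdc
        rw [hfract] at h0
        linarith
      · push_cast
        have h1 := Int.lt_floor_add_one X
        have h2 := vdc_nonneg b c
        linarith
    have hblock : (((Finset.range (b ^ (w K))).filter
        (fun r => vdc b (N + r) ∈ Set.Ico (0:ℝ) t)).card : ℤ)
        = (⌈X - vdc b c⌉).toNat := by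
      have hfe : (Finset.range (b ^ (w K))).filter
            (fun r => vdc b (N + r) ∈ Set.Ico (0:ℝ) t)
          = (Finset.range (b ^ (w K))).filter
            (fun r => vdc b (c * b ^ (w K) + r) ∈ Set.Ico (0:ℝ) t) := by
        apply Finset.filter_congr
        intro x _
        rw [hNc]
      rw [hfe, hX]
      exact block_count b hb t ht0 ht1 (w K) c
    have hcard2 : (((Finset.range (b ^ (w K))).filter
        (fun r => vdc b (N + r) ∈ Set.Ico (0:ℝ) t)).card : ℝ)
        = (⌊X⌋ : ℝ) + 1 := by
      rw [hceil] at hblock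
      rw [Int.toNat_of_nonneg (by omega)] at hblock
      exact_mod_cast hblock
    have hsR : (((Finset.range (N + b ^ (w K))).filter
          (fun n => vdc b n ∈ Set.Ico (0:ℝ) t)).card : ℝ)
        = (((Finset.range N).filter (fun n => vdc b n ∈ Set.Ico (0:ℝ) t)).card : ℝ)
          + (((Finset.range (b ^ (w K))).filter
              (fun r => vdc b (N + r) ∈ Set.Ico (0:ℝ) t)).card : ℝ) := by
      exact_mod_cast congrArg (Nat.cast : ℕ → ℝ)
        (card_filter_range_add (fun n => vdc b n ∈ Set.Ico (0:ℝ) t) N (b ^ (w K)))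
    have hXle : Int.fract X ≤ 1 - 1/b := by
      have h3 := hA K (by omega)
      rw [← hX] at h3
      exact h3
    have hfinal : 1/(b:ℝ) ≤ ((⌊X⌋ : ℝ) + 1) - X := by
      rw [hfract] at hXle
      linarith
    have htot : ((N + b ^ (w K) : ℕ) : ℝ) * t = (N:ℝ) * t + X := by
      rw [hX]; push_cast; ring
    have hKcast : ((K+1 : ℕ) : ℝ) = (K:ℝ) + 1 := by push_cast; ring
    rw [hsum]
    rw [hsR, htot, hcard2, hKcast]
    have hdiv : ((K:ℝ) + 1)/(b:ℝ) = (K:ℝ)/b + 1/b := by ring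
    rw [hdiv]
    linarith [ih]

/-- If `t ∈ [0,1)` is not a `b`-adic rational, then `[0,t)` is not a bounded remainder
interval for the van der Corput sequence in base `b`. -/
theorem vdc_not_bounded_remainder (b : ℕ) (hb : 2 ≤ b) (t : ℝ)
    (ht : t ∈ Set.Ico (0 : ℝ) 1)
    (hirr : ∀ m k : ℕ, t ≠ (k : ℝ) / (b : ℝ) ^ m) :
    ∀ C : ℝ, ∃ N : ℕ,
      C < |(((Finset.range N).filter (fun n => vdc b n ∈ Set.Ico (0 : ℝ) t)).card : ℝ)
        - (N : ℝ) * t| := by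
  obtain ⟨ht0, ht1⟩ := ht
  have hbR : (0:ℝ) < b := by positivity
  have hb1 : (1:ℝ) < b := by exact_mod_cast (by omega : 1 < b)
  have hf : ∀ m : ℕ, 0 < Int.fract ((b:ℝ)^m * t) := fract_pos b t hb ht0 hirr
  have hstep : ∀ p : ℕ, ∃ m : ℕ, p < m ∧ Int.fract ((b:ℝ)^m * t) ≤ 1 - 1/b ∧
      1 ≤ (b:ℝ)^(m - p) * Int.fract ((b:ℝ)^p * t) := by
    intro p
    have hfp := hf p
    obtain ⟨s, hs⟩ := pow_unbounded_of_one_lt (1 / Int.fract ((b:ℝ)^p * t)) hb1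
    obtain ⟨m, hm1, hm2⟩ := A_unbounded b t hb (p + s + 1) hf
    refine ⟨m, by omega, hm2, ?_⟩
    have h1 : (b:ℝ)^s ≤ (b:ℝ)^(m - p) := pow_le_pow_right₀ (le_of_lt hb1) (by omega)
    rw [div_lt_iff₀ hfp] at hs
    nlinarith
  -- construct the sequence u
  let u : ℕ → ℕ := fun n =>
    Nat.rec (Classical.choose (A_unbounded b t hb 0 hf))
      (fun _ prev => Classical.choose (hstep prev)) n
  have hu1 : ∀ n, u n < u (n+1) := fun n => (Classical.choose_spec (hstep (u n))).1
  have hu2 : ∀ n, Int.fract ((b:ℝ)^(u n) * t) ≤ 1 - 1/b := by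
    intro n
    cases n with
    | zero => exact (Classical.choose_spec (A_unbounded b t hb 0 hf)).2
    | succ n => exact (Classical.choose_spec (hstep (u n))).2.1
  have hu3 : ∀ n, 1 ≤ (b:ℝ)^(u (n+1) - u n) * Int.fract ((b:ℝ)^(u n) * t) :=
    fun n => (Classical.choose_spec (hstep (u n))).2.2
  intro C
  obtain ⟨K, hK⟩ := exists_nat_gt (C * b)
  set w : ℕ → ℕ := fun i => u (K - 1 - i) with hw
  have hdec : ∀ i, i + 1 < K → w (i+1) < w i := by
    intro i hi
    have e : K - 1 - i = (K - 2 - i) + 1 := by omega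
    have e2 : K - 1 - (i+1) = K - 2 - i := by omega
    rw [hw]
    simp only
    rw [e, e2]
    exact hu1 (K - 2 - i)
  have hA : ∀ i, i < K → Int.fract ((b:ℝ)^(w i) * t) ≤ 1 - 1/b := fun i _ => hu2 _
  have hgap : ∀ i, i + 1 < K → 1 ≤ (b:ℝ)^(w i - w (i+1)) * Int.fract ((b:ℝ)^(w (i+1)) * t) := by
    intro i hi
    have e : K - 1 - i = (K - 2 - i) + 1 := by omega
    have e2 : K - 1 - (i+1) = K - 2 - i := by omega
    rw [hw]
    simp only
    rw [e, e2]
    exact hu3 (K - 2 - i)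
  have hacc := accum b hb t ht0 ht1 hf K w hdec hA hgap
  refine ⟨∑ i ∈ Finset.range K, b ^ w i, ?_⟩
  have hCK : C < (K:ℝ) / b := by
    rw [lt_div_iff₀ hbR]
    exact hK
  calc C < (K:ℝ)/b := hCK
  _ ≤ _ := hacc.trans (le_abs_self _)
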